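/- Let θ be an infinite cardinal with cf(2^θ) = θ⁺, and let λ be a cardinal with θ < λ < 2^θ. Then for any family F of at most 2^θ graphs, each of cardinality λ, there exists a graph of cardinality λ (indeed, an incidence graph Γ_A for some set A of subsets of θ with |A| = λ) that does not embed as an induced subgraph into any member of F. -/

import Mathlib

universe u

open Cardinal

/-- The incidence graph `Γ_A` of a family `A` of subsets of `Θ`: the bipartite graph
with left side `Θ`, right side `A`, and an edge between `z : Θ` and `x ∈ A` iff `z ∈ x`. -/
def incidenceGraph (Θ : Type u) (A : Set (Set Θ)) : SimpleGraph (Θ ⊕ ↥A) :=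
  SimpleGraph.fromRel fun v w =>
    match v, w with
    | Sum.inl z, Sum.inr x => z ∈ (x : Set Θ)
    | _, _ => False

/-- Diagonalization lemma: if `cf(2^θ) = θ⁺` and `θ < lam < 2^θ`, then for any family of
at most `2^θ` "forbidden" collections `F j ⊆ 𝒫(θ)`, each of size at most `lam`, there is
a set `A ⊆ 𝒫(θ)` of size `lam` not contained in any `F j`. -/
theorem key_diag (θ lam : Cardinal.{u}) (hθ : ℵ₀ ≤ θ)
    (hcf : ((2 : Cardinal.{u}) ^ θ).ord.cof = Order.succ θ)
    (hθlam : θ < lam) (hlt : lam < 2 ^ θ)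
    (J : Type u) (hJ : #J ≤ 2 ^ θ) (F : J → Set (Set θ.out))
    (hF : ∀ j, #(F j) ≤ lam) :
    ∃ A : Set (Set θ.out), #A = lam ∧ ∀ j, ¬ A ⊆ F j := by
  set χ := (2 : Cardinal.{u}) ^ θ with hχdef
  have hθχ : θ < χ := Cardinal.cantor θ
  have hχinf : ℵ₀ ≤ χ := le_of_lt (lt_of_le_of_lt hθ hθχ)
  have hlaminf : ℵ₀ ≤ lam := le_of_lt (lt_of_le_of_lt hθ hθlam)
  have hmkΘ : #(Set θ.out) = χ := by rw [Cardinal.mk_set, Cardinal.mk_out]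
  -- embed J into χ.ord.toType
  have hJ' : #J ≤ #(χ.ord.ToType) := by rwa [Cardinal.mk_ord_toType]
  obtain ⟨e⟩ := Cardinal.le_def _ _ |>.mp hJ'
  -- unbounded set of size θ⁺
  haveI : IsWellOrder χ.ord.ToType (· < ·) := isWellOrder_lt
  obtain ⟨S, hSub, hScard⟩ :=
    Order.exists_cof_eq χ.ord.ToType
  rw [Ordinal.cof_toType, hcf] at hScard
  -- the union of forbidden sets below a point is small
  have hsmall : ∀ s : S, #(⋃ j : {j : J // e j ≤ (s : χ.ord.ToType)}, F j.1) < χ := by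
    intro s
    have h1 : #{j : J // e j ≤ (s : χ.ord.ToType)} ≤ #(Set.Iic (s : χ.ord.ToType)) := by
      exact Cardinal.mk_le_of_injective (f := fun j => ⟨e j.1, j.2⟩)
        fun a b hab => Subtype.ext (e.injective (congrArg Subtype.val hab))
    have h2 : #(Set.Iic (s : χ.ord.ToType)) < χ := by
      rw [← Set.Iio_insert]
      calc #(insert (s : χ.ord.ToType) (Set.Iio (s : χ.ord.ToType)) : Set _)
          ≤ #(Set.Iio (s : χ.ord.ToType)) + 1 := Cardinal.mk_insert_le
        _ < χ := Cardinal.add_lt_of_lt hχinf (Cardinal.mk_Iio_ord_toType _)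
              (lt_of_lt_of_le Cardinal.one_lt_aleph0 hχinf)
    calc #(⋃ j : {j : J // e j ≤ (s : χ.ord.ToType)}, F j.1)
        ≤ Cardinal.sum (fun j : {j : J // e j ≤ (s : χ.ord.ToType)} => #(F j.1)) :=
          Cardinal.mk_iUnion_le_sum_mk
      _ ≤ Cardinal.sum (fun _ : {j : J // e j ≤ (s : χ.ord.ToType)} => lam) :=
          Cardinal.sum_le_sum _ _ fun j => hF j.1
      _ = #{j : J // e j ≤ (s : χ.ord.ToType)} * lam := Cardinal.sum_const' _ _
      _ < χ := Cardinal.mul_lt_of_lt hχinf (lt_of_le_of_lt h1 h2) hlt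
  -- choose a diagonal element for each s
  have hx : ∀ s : S, ∃ x : Set θ.out,
      x ∉ ⋃ j : {j : J // e j ≤ (s : χ.ord.ToType)}, F j.1 := by
    intro s
    by_contra h
    push_neg at h
    have hu : (⋃ j : {j : J // e j ≤ (s : χ.ord.ToType)}, F j.1) = Set.univ :=
      Set.eq_univ_of_forall h
    have hcard := hsmall s
    rw [hu, Cardinal.mk_univ, hmkΘ] at hcard
    exact lt_irrefl _ hcard
  choose x hxmem using hx
  -- pad to size lam
  obtain ⟨W, hW⟩ := Cardinal.le_mk_iff_exists_set.mp (hmkΘ ▸ hlt.le)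
  refine ⟨Set.range x ∪ W, ?_, ?_⟩
  · apply le_antisymm
    · calc #(Set.range x ∪ W : Set _) ≤ #(Set.range x) + #W := Cardinal.mk_union_le _ _
        _ ≤ Order.succ θ + lam := by
            refine add_le_add ?_ hW.le
            calc #(Set.range x) ≤ #S := Cardinal.mk_range_le
              _ = Order.succ θ := hScard
        _ ≤ lam + lam := add_le_add (Order.succ_le_of_lt hθlam) le_rfl
        _ = lam := Cardinal.add_eq_self hlaminf
    · rw [← hW]; exact Cardinal.mk_le_mk_of_subset Set.subset_union_right
  · intro j hAsub
    obtain ⟨b, hbS, hb⟩ := hSub (e j)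
    have hjle : e j ≤ b := hb
    have hxA : x ⟨b, hbS⟩ ∈ Set.range x ∪ W := Or.inl ⟨⟨b, hbS⟩, rfl⟩
    have := hAsub hxA
    exact hxmem ⟨b, hbS⟩ (Set.mem_iUnion.mpr ⟨⟨j, hjle⟩, this⟩)

/-- If `θ` is infinite, `cf(2^θ) = θ⁺`, and `θ < λ < 2^θ`, then for every family of
at most `2^θ` graphs of cardinality `λ` there is an incidence graph `Γ_A`, with
`A ⊆ 𝒫(θ)` of cardinality `λ`, embedding (as an induced subgraph) into no member of
the family. -/
theorem stmt14 (θ lam : Cardinal.{u}) (hθ : ℵ₀ ≤ θ)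
    (hcf : ((2 : Cardinal.{u}) ^ θ).ord.cof = Order.succ θ)
    (hθlam : θ < lam) (hlt : lam < 2 ^ θ)
    (ι : Type u) (V : ι → Type u) (G : ∀ i, SimpleGraph (V i))
    (hι : #ι ≤ 2 ^ θ) (hV : ∀ i, #(V i) = lam) :
    ∃ A : Set (Set θ.out), #A = lam ∧
      ∀ i, IsEmpty (incidenceGraph θ.out A ↪g G i) := by
  have hχinf : ℵ₀ ≤ (2 : Cardinal.{u}) ^ θ :=
    le_of_lt (lt_of_le_of_lt hθ (Cardinal.cantor θ))
  -- index type of "forbidden patterns"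
  set J := (i : ι) × (θ.out → V i) with hJdef
  have hJcard : #J ≤ 2 ^ θ := by
    have h1 : ∀ i : ι, #(θ.out → V i) = lam ^ θ := by
      intro i
      rw [← Cardinal.power_def, hV i, Cardinal.mk_out]
    have h2 : lam ^ θ ≤ 2 ^ θ := by
      calc lam ^ θ ≤ ((2 : Cardinal.{u}) ^ θ) ^ θ :=
            Cardinal.power_le_power_right hlt.le
        _ = 2 ^ (θ * θ) := by rw [← Cardinal.power_mul]
        _ = 2 ^ θ := by rw [Cardinal.mul_eq_self hθ]
    calc #J = Cardinal.sum (fun i : ι => #(θ.out → V i)) := Cardinal.mk_sigma _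
      _ ≤ Cardinal.sum (fun _ : ι => 2 ^ θ) :=
          Cardinal.sum_le_sum _ _ fun i => (h1 i) ▸ h2
      _ = #ι * 2 ^ θ := Cardinal.sum_const' _ _
      _ ≤ (2 ^ θ) * (2 ^ θ) := mul_le_mul_left hι _
      _ = 2 ^ θ := Cardinal.mul_eq_self hχinf
  -- forbidden families
  set F : J → Set (Set θ.out) :=
    fun j => Set.range (fun v : V j.1 => {z : θ.out | (G j.1).Adj (j.2 z) v}) with hFdef
  have hFcard : ∀ j, #(F j) ≤ lam := by
    intro j
    calc #(F j) ≤ #(V j.1) := Cardinal.mk_range_le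
      _ = lam := hV j.1
  obtain ⟨A, hA, hAnot⟩ := key_diag θ lam hθ hcf hθlam hlt J hJcard F hFcard
  refine ⟨A, hA, fun i => ⟨fun f => ?_⟩⟩
  set g : θ.out → V i := fun z => f (Sum.inl z) with hgdef
  apply hAnot ⟨i, g⟩
  intro s hs
  refine ⟨f (Sum.inr ⟨s, hs⟩), ?_⟩
  ext z
  have hadj : (G i).Adj (g z) (f (Sum.inr ⟨s, hs⟩)) ↔
      (incidenceGraph θ.out A).Adj (Sum.inl z) (Sum.inr ⟨s, hs⟩) := f.map_adj_iff
  have hinc : (incidenceGraph θ.out A).Adj (Sum.inl z) (Sum.inr ⟨s, hs⟩) ↔ z ∈ s := by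
    rw [incidenceGraph, SimpleGraph.fromRel_adj]
    simp
  simp only [Set.mem_setOf_eq]
  rw [hadj, hinc]
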